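/- Let Q : ℝ → ℝ be a ground state and set m₀ = (1/4)∫_ℝ Q. Let P : ℝ → ℝ be three times continuously differentiable and bounded, with P' and P'' bounded and tending to 0 at ±∞ and with P', P'' integrable, satisfying: (−P'' + P − 5Q⁴P)'(y) = (1/2)Q(y) + y Q'(y) for all y ∈ ℝ, lim_{y→−∞} P(y) = 2m₀, and lim_{y→+∞} P(y) = 0. Then ∫_ℝ P(y) Q(y)⁵ dy = −m₀². -/

import Mathlib

open MeasureTheory Filter

/-- A ground state: a smooth, even, positive solution of `Q'' + Q⁵ = Q` on `ℝ`,
all of whose derivatives decay exponentially. -/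
def IsGroundState (Q : ℝ → ℝ) : Prop :=
  ContDiff ℝ (⊤ : ℕ∞) Q ∧ (∀ y : ℝ, 0 < Q y) ∧ (∀ y : ℝ, Q (-y) = Q y) ∧
  (∀ y : ℝ, deriv (deriv Q) y + Q y ^ 5 = Q y) ∧
  ∀ k : ℕ, ∃ C > (0:ℝ), ∀ y : ℝ, |iteratedDeriv k Q y| ≤ C * Real.exp (-|y|)

section AuxStmt4

open Set Topology intervalIntegral

private lemma intExpAbs4 : Integrable (fun x : ℝ => Real.exp (-|x|)) :=
  MeasureTheory.LocallyIntegrable.integrable_of_isBigO_atTop_of_norm_isNegInvariant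
      (f := fun x : ℝ => Real.exp (-|x|)) (g := fun x : ℝ => Real.exp (-1 * x)) (μ := volume)
      ((Real.continuous_exp.comp continuous_abs.neg).locallyIntegrable)
      (Filter.EventuallyEq.of_eq (by funext x; simp [Function.comp, abs_neg]))
      (Asymptotics.IsBigO.of_bound 1 (by
        filter_upwards [Filter.eventually_ge_atTop (0:ℝ)] with x hx
        simp [Real.norm_eq_abs, abs_of_nonneg hx, Real.abs_exp]))
      ⟨Ioi 0, Ioi_mem_atTop 0, exp_neg_integrableOn_Ioi 0 one_pos⟩

private lemma integrable_of_expbound4 {f : ℝ → ℝ} (hf : Continuous f) (C : ℝ)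
    (h : ∀ y, |f y| ≤ C * Real.exp (-|y|)) : Integrable f :=
  (intExpAbs4.const_mul C).mono' hf.aestronglyMeasurable (ae_of_all _ fun y => by
    simpa [Real.norm_eq_abs] using h y)

private lemma abs_mul_le4 {a b c d : ℝ} (h1 : |a| ≤ c) (h2 : |b| ≤ d) : |a * b| ≤ c * d := by
  rw [abs_mul]; exact mul_le_mul h1 h2 (abs_nonneg _) ((abs_nonneg a).trans h1)

private lemma texp_top4 : Tendsto (fun y : ℝ => Real.exp (-|y|)) atTop (𝓝 0) :=
  Real.tendsto_exp_atBot.comp (tendsto_neg_atBot_iff.mpr tendsto_abs_atTop_atTop)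

private lemma texp_bot4 : Tendsto (fun y : ℝ => Real.exp (-|y|)) atBot (𝓝 0) :=
  Real.tendsto_exp_atBot.comp (tendsto_neg_atBot_iff.mpr tendsto_abs_atBot_atTop)

private lemma tend_top_of_expbound4 {f : ℝ → ℝ} {C : ℝ}
    (h : ∀ y, |f y| ≤ C * Real.exp (-|y|)) : Tendsto f atTop (𝓝 0) :=
  squeeze_zero_norm (by simpa [Real.norm_eq_abs] using h)
    (by simpa using texp_top4.const_mul C)

private lemma tend_bot_of_expbound4 {f : ℝ → ℝ} {C : ℝ}
    (h : ∀ y, |f y| ≤ C * Real.exp (-|y|)) : Tendsto f atBot (𝓝 0) :=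
  squeeze_zero_norm (by simpa [Real.norm_eq_abs] using h)
    (by simpa using texp_bot4.const_mul C)

end AuxStmt4

/-- If `(𝓛P)' = ΛQ` with `P → 2m₀` at `−∞` and `P → 0` at `+∞`, then
`∫ P Q⁵ = −m₀²`, where `m₀ = (1/4)∫ Q`. -/
theorem stmt_4 (Q : ℝ → ℝ) (hQ : IsGroundState Q)
    (m₀ : ℝ) (hm₀ : m₀ = (1/4) * ∫ y : ℝ, Q y)
    (P : ℝ → ℝ) (hP : ContDiff ℝ 3 P)
    (hPbd : ∃ M : ℝ, ∀ y : ℝ, |P y| ≤ M)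
    (hP'bd : ∃ M : ℝ, ∀ y : ℝ, |deriv P y| ≤ M)
    (hP''bd : ∃ M : ℝ, ∀ y : ℝ, |deriv (deriv P) y| ≤ M)
    (hP'top : Tendsto (deriv P) atTop (nhds 0))
    (hP'bot : Tendsto (deriv P) atBot (nhds 0))
    (hP''top : Tendsto (deriv (deriv P)) atTop (nhds 0))
    (hP''bot : Tendsto (deriv (deriv P)) atBot (nhds 0))
    (hP'int : Integrable (deriv P))
    (hP''int : Integrable (deriv (deriv P)))
    (hLP : ∀ y : ℝ,
      deriv (fun z : ℝ => -(deriv (deriv P) z) + P z - 5 * Q z ^ 4 * P z) y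
        = (1/2) * Q y + y * deriv Q y)
    (hPbot : Tendsto P atBot (nhds (2 * m₀)))
    (hPtop : Tendsto P atTop (nhds 0)) :
    ∫ y : ℝ, P y * Q y ^ 5 = -m₀ ^ 2 := by
  open Set Topology intervalIntegral in
  obtain ⟨hQs, hQpos, hQeven, hQeq, hQdecay⟩ := hQ
  obtain ⟨M, hM⟩ := hPbd
  obtain ⟨M', hM'⟩ := hP'bd
  obtain ⟨M'', hM''⟩ := hP''bd
  have hM0 : 0 ≤ M := (abs_nonneg _).trans (hM 0)
  -- decay constants
  obtain ⟨C0, hC0pos, hC0⟩ := hQdecay 0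
  obtain ⟨C1, hC1pos, hC1⟩ := hQdecay 1
  obtain ⟨C2, hC2pos, hC2⟩ := hQdecay 2
  rw [iteratedDeriv_zero] at hC0
  rw [show iteratedDeriv 1 Q = deriv Q from iteratedDeriv_one] at hC1
  rw [show iteratedDeriv 2 Q = deriv (deriv Q) by
    rw [iteratedDeriv_succ, iteratedDeriv_one]] at hC2
  -- smoothness facts
  have hQd : Differentiable ℝ Q := (contDiff_infty_iff_deriv.mp hQs).1
  have hQs' : ContDiff ℝ (⊤ : ℕ∞) (deriv Q) := (contDiff_infty_iff_deriv.mp hQs).2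
  have hQ'd : Differentiable ℝ (deriv Q) := (contDiff_infty_iff_deriv.mp hQs').1
  have hQc : Continuous Q := hQs.continuous
  have hQ'c : Continuous (deriv Q) := hQs'.continuous
  have hQ''c : Continuous (deriv (deriv Q)) :=
    ((contDiff_infty_iff_deriv.mp hQs').2).continuous
  have hP3 : ContDiff ℝ ((2:ℕ) + 1) P := by exact_mod_cast hP
  have hPd : Differentiable ℝ P := hP3.differentiable (by norm_num)
  have hPc : Continuous P := hPd.continuous
  have hP2 : ContDiff ℝ ((1:ℕ) + 1) (deriv P) := by
    exact_mod_cast (contDiff_succ_iff_deriv.mp hP3).2.2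
  have hP'd : Differentiable ℝ (deriv P) := hP2.differentiable (by norm_num)
  have hP'c : Continuous (deriv P) := hP'd.continuous
  have hP1 : ContDiff ℝ (1:ℕ) (deriv (deriv P)) := by
    exact_mod_cast (contDiff_succ_iff_deriv.mp hP2).2.2
  have hP''d : Differentiable ℝ (deriv (deriv P)) := hP1.differentiable (by norm_num)
  have hP''c : Continuous (deriv (deriv P)) := hP''d.continuous
  -- sup bounds from decay
  have hexple : ∀ y : ℝ, Real.exp (-|y|) ≤ 1 := fun y => by
    rw [← Real.exp_zero]
    exact Real.exp_le_exp.mpr (neg_nonpos.mpr (abs_nonneg y))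
  have hQbd : ∀ y, |Q y| ≤ C0 := fun y => (hC0 y).trans (by
    nlinarith [hexple y, Real.exp_pos (-|y|)])
  -- integrability
  have hQint : Integrable Q := integrable_of_expbound4 hQc C0 hC0
  have h4m : ∫ y : ℝ, Q y = 4 * m₀ := by rw [hm₀]; ring
  -- the function F
  set c0 : ℝ := ∫ t in Iic (0:ℝ), Q t with hc0
  set F : ℝ → ℝ := fun y => c0 + ∫ t in (0:ℝ)..y, Q t with hFdef
  have hF : ∀ y, HasDerivAt F (Q y) y := by
    intro y
    have h := intervalIntegral.integral_hasDerivAt_right (f := Q) (a := 0) (b := y)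
      hQint.intervalIntegrable (hQc.stronglyMeasurableAtFilter _ _) hQc.continuousAt
    simpa [hFdef] using (h.const_add c0)
  have hFc : Continuous F := by
    rw [continuous_iff_continuousAt]; exact fun y => (hF y).differentiableAt.continuousAt
  have hFIic : ∀ y, F y = ∫ t in Iic y, Q t := by
    intro y
    have := integral_Iic_sub_Iic (f := Q) (μ := volume) (a := 0) (b := y)
      hQint.integrableOn hQint.integrableOn
    simp only [hFdef, hc0]
    linarith
  have hFtop : Tendsto F atTop (𝓝 (4 * m₀)) := by
    have h1 : Tendsto (fun y : ℝ => ∫ t in (0:ℝ)..y, Q t) atTop (𝓝 (∫ t in Ioi (0:ℝ), Q t)) :=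
      intervalIntegral_tendsto_integral_Ioi 0 hQint.integrableOn tendsto_id
    have h2 := (tendsto_const_nhds (x := c0) (f := atTop)).add h1
    have h3 : c0 + ∫ t in Ioi (0:ℝ), Q t = 4 * m₀ := by
      rw [hc0, integral_Iic_add_Ioi hQint.integrableOn hQint.integrableOn, h4m]
    rw [h3] at h2
    exact h2
  have hFbot : Tendsto F atBot (𝓝 0) := by
    have h1 : Tendsto (fun y : ℝ => ∫ t in y..(0:ℝ), Q t) atBot (𝓝 c0) :=
      intervalIntegral_tendsto_integral_Iic 0 hQint.integrableOn tendsto_id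
    have h2 := (tendsto_const_nhds (x := c0) (f := atBot)).sub h1
    rw [sub_self] at h2
    refine h2.congr fun y => ?_
    rw [hFdef]
    simp [intervalIntegral.integral_symm 0 y]
  have hB : ∃ B ≥ 0, ∀ y, |F y| ≤ B := by
    refine ⟨∫ t, |Q t|, integral_nonneg fun t => abs_nonneg _, fun y => ?_⟩
    rw [hFIic y]
    calc |∫ t in Iic y, Q t| ≤ ∫ t in Iic y, |Q t| := by
          simpa [Real.norm_eq_abs] using
            norm_integral_le_integral_norm (μ := volume.restrict (Iic y)) Q
      _ ≤ ∫ t, |Q t| := setIntegral_le_integral hQint.abs (ae_of_all _ fun t => abs_nonneg _)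
  obtain ⟨B, hB0, hFbd⟩ := hB
  -- limits of Q and deriv Q
  have hQtop : Tendsto Q atTop (𝓝 0) := tend_top_of_expbound4 hC0
  have hQbot : Tendsto Q atBot (𝓝 0) := tend_bot_of_expbound4 hC0
  have hQ'top : Tendsto (deriv Q) atTop (𝓝 0) := tend_top_of_expbound4 hC1
  have hQ'bot : Tendsto (deriv Q) atBot (𝓝 0) := tend_bot_of_expbound4 hC1
  -- |y| ≤ exp |y|
  have habs_exp : ∀ y : ℝ, |y| ≤ Real.exp |y| := fun y =>
    (le_add_of_nonneg_right zero_le_one).trans (Real.add_one_le_exp |y|)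
  -- integrability of the various products
  have hQP''int : Integrable (fun y => Q y * deriv (deriv P) y) :=
    integrable_of_expbound4 (hQc.mul hP''c) (C0 * M'') (fun y => by
      calc |Q y * deriv (deriv P) y| ≤ (C0 * Real.exp (-|y|)) * M'' :=
            abs_mul_le4 (hC0 y) (hM'' y)
        _ = C0 * M'' * Real.exp (-|y|) := by ring)
  have hQ'P'int : Integrable (fun y => deriv Q y * deriv P y) :=
    integrable_of_expbound4 (hQ'c.mul hP'c) (C1 * M') (fun y => by
      calc |deriv Q y * deriv P y| ≤ (C1 * Real.exp (-|y|)) * M' :=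
            abs_mul_le4 (hC1 y) (hM' y)
        _ = C1 * M' * Real.exp (-|y|) := by ring)
  have hQ''Pint : Integrable (fun y => deriv (deriv Q) y * P y) :=
    integrable_of_expbound4 (hQ''c.mul hPc) (C2 * M) (fun y => by
      calc |deriv (deriv Q) y * P y| ≤ (C2 * Real.exp (-|y|)) * M :=
            abs_mul_le4 (hC2 y) (hM y)
        _ = C2 * M * Real.exp (-|y|) := by ring)
  have hPQint : Integrable (fun y => P y * Q y) :=
    integrable_of_expbound4 (hPc.mul hQc) (M * C0) (fun y => by
      calc |P y * Q y| ≤ M * (C0 * Real.exp (-|y|)) := abs_mul_le4 (hM y) (hC0 y)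
        _ = M * C0 * Real.exp (-|y|) := by ring)
  have hQ5bd : ∀ y, |Q y ^ 5| ≤ C0 ^ 4 * (C0 * Real.exp (-|y|)) := by
    intro y
    have h := hC0 y
    have h0 : |Q y| ≤ C0 := hQbd y
    have ha : (0:ℝ) ≤ |Q y| := abs_nonneg _
    calc |Q y ^ 5| = |Q y| ^ 4 * |Q y| := by
          rw [show (5:ℕ) = 4 + 1 from rfl, pow_succ, abs_mul, abs_pow]
      _ ≤ C0 ^ 4 * (C0 * Real.exp (-|y|)) := by
          apply mul_le_mul (pow_le_pow_left₀ ha h0 4) h ha (pow_nonneg hC0pos.le 4)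
  have hPQ5int : Integrable (fun y => P y * Q y ^ 5) :=
    integrable_of_expbound4 (hPc.mul (hQc.pow 5)) (M * (C0 ^ 4 * C0)) (fun y => by
      calc |P y * Q y ^ 5| ≤ M * (C0 ^ 4 * (C0 * Real.exp (-|y|))) :=
            abs_mul_le4 (hM y) (hQ5bd y)
        _ = M * (C0 ^ 4 * C0) * Real.exp (-|y|) := by ring)
  have hFQint : Integrable (fun y => F y * Q y) :=
    integrable_of_expbound4 (hFc.mul hQc) (B * C0) (fun y => by
      calc |F y * Q y| ≤ B * (C0 * Real.exp (-|y|)) := abs_mul_le4 (hFbd y) (hC0 y)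
        _ = B * C0 * Real.exp (-|y|) := by ring)
  have hyQ2int : Integrable (fun y => y * Q y ^ 2) :=
    integrable_of_expbound4 (continuous_id.mul (hQc.pow 2)) (C0 ^ 2) (fun y => by
      have hone : Real.exp |y| * Real.exp (-|y|) = 1 := by
        rw [← Real.exp_add]; simp
      have h1 : |Q y ^ 2| ≤ (C0 * Real.exp (-|y|)) * (C0 * Real.exp (-|y|)) := by
        rw [sq, abs_mul]
        exact mul_le_mul (hC0 y) (hC0 y) (abs_nonneg _) (by positivity)
      have h2 : |y * Q y ^ 2| ≤ Real.exp |y| * ((C0 * Real.exp (-|y|)) * (C0 * Real.exp (-|y|))) :=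
        abs_mul_le4 (habs_exp y) h1
      calc |y * Q y ^ 2|
          ≤ Real.exp |y| * ((C0 * Real.exp (-|y|)) * (C0 * Real.exp (-|y|))) := h2
        _ = C0 ^ 2 * (Real.exp |y| * Real.exp (-|y|)) * Real.exp (-|y|) := by ring
        _ = C0 ^ 2 * Real.exp (-|y|) := by rw [hone]; ring)
  -- the function g = 𝓛P and R
  set g : ℝ → ℝ := fun z : ℝ => -(deriv (deriv P) z) + P z - 5 * Q z ^ 4 * P z with hgdef
  set R : ℝ → ℝ := fun y => y * Q y - (1/2) * F y + 2 * m₀ with hRdef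
  have hgdiff : Differentiable ℝ g := by
    apply Differentiable.sub
    · exact hP''d.neg.add hPd
    · exact (differentiable_const (5:ℝ)).mul ((hQd.pow 4)) |>.mul hPd
  have hgderiv : ∀ y, HasDerivAt g ((1/2) * Q y + y * deriv Q y) y := by
    intro y
    have h := (hgdiff y).hasDerivAt
    rwa [hLP y] at h
  have hRderiv : ∀ y, HasDerivAt R ((1/2) * Q y + y * deriv Q y) y := by
    intro y
    have h1 : HasDerivAt (fun y : ℝ => y * Q y) (1 * Q y + y * deriv Q y) y :=
      (hasDerivAt_id y).mul (hQd y).hasDerivAt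
    have h2 := (h1.sub ((hF y).const_mul (1/2 : ℝ))).add_const (2 * m₀)
    have : 1 * Q y + y * deriv Q y - (1/2) * Q y = (1/2) * Q y + y * deriv Q y := by ring
    rw [this] at h2
    exact h2
  -- g = R
  have hgR : ∀ y, g y = R y := by
    have hconst : ∀ y, g y - R y = g 0 - R 0 := by
      intro y
      exact is_const_of_deriv_eq_zero
        (fun x => ((hgderiv x).sub (hRderiv x)).differentiableAt)
        (fun x => by
          have := ((hgderiv x).sub (hRderiv x))
          simpa using this.deriv) y 0
    have hgtop : Tendsto g atTop (𝓝 0) := by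
      have hq4 : Tendsto (fun y => (5:ℝ) * Q y ^ 4 * P y) atTop (𝓝 (5 * 0 ^ 4 * 0)) :=
        ((tendsto_const_nhds.mul (hQtop.pow 4)).mul hPtop)
      have := ((hP''top.neg.add hPtop).sub hq4)
      simpa using this
    have hRtop : Tendsto R atTop (𝓝 0) := by
      have hyQ : Tendsto (fun y : ℝ => y * Q y) atTop (𝓝 0) := by
        have hbnd : ∀ᶠ y in atTop, ‖y * Q y‖ ≤ C0 * (y * Real.exp (-y)) := by
          filter_upwards [Filter.eventually_ge_atTop (0:ℝ)] with y hy
          have h1 : |y * Q y| ≤ |y| * (C0 * Real.exp (-|y|)) := abs_mul_le4 le_rfl (hC0 y)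
          rw [Real.norm_eq_abs]
          calc |y * Q y| ≤ |y| * (C0 * Real.exp (-|y|)) := h1
            _ = C0 * (y * Real.exp (-y)) := by rw [abs_of_nonneg hy]; ring
        have hgt : Tendsto (fun y : ℝ => C0 * (y * Real.exp (-y))) atTop (𝓝 0) := by
          have h := (Real.tendsto_pow_mul_exp_neg_atTop_nhds_zero 1).const_mul C0
          simpa using h
        exact squeeze_zero_norm' hbnd hgt
      have h2 := (hyQ.sub (hFtop.const_mul (1/2 : ℝ))).add_const (2 * m₀)
      have h3 : (0:ℝ) - (1/2) * (4 * m₀) + 2 * m₀ = 0 := by ring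
      rw [h3] at h2
      exact h2
    have hDtop : Tendsto (fun y => g y - R y) atTop (𝓝 0) := by
      simpa using hgtop.sub hRtop
    have hDconst : Tendsto (fun y => g y - R y) atTop (𝓝 (g 0 - R 0)) := by
      rw [show (fun y => g y - R y) = fun _ => g 0 - R 0 from funext fun y => hconst y]
      exact tendsto_const_nhds
    have h0 : g 0 - R 0 = 0 := tendsto_nhds_unique hDconst hDtop
    intro y
    have := hconst y
    rw [h0] at this
    linarith
  -- Step 1 : ∫ g Q = -4 ∫ P Q^5
  have ibp1 : ∫ y : ℝ, Q y * deriv (deriv P) y = - ∫ y : ℝ, deriv Q y * deriv P y := by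
    have h := MeasureTheory.integral_mul_deriv_eq_deriv_mul
      (u := Q) (u' := deriv Q) (v := deriv P) (v' := deriv (deriv P))
      (fun x _ => (hQd x).hasDerivAt) (fun x _ => (hP'd x).hasDerivAt)
      hQP''int hQ'P'int
      (by simpa [Pi.mul_def] using hQbot.mul hP'bot) (by simpa [Pi.mul_def] using hQtop.mul hP'top)
    simpa using h
  have ibp2 : ∫ y : ℝ, deriv Q y * deriv P y = - ∫ y : ℝ, deriv (deriv Q) y * P y := by
    have h := MeasureTheory.integral_mul_deriv_eq_deriv_mul
      (u := deriv Q) (u' := deriv (deriv Q)) (v := P) (v' := deriv P)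
      (fun x _ => (hQ'd x).hasDerivAt) (fun x _ => (hPd x).hasDerivAt)
      hQ'P'int hQ''Pint
      (by simpa [Pi.mul_def] using hQ'bot.mul hPbot) (by simpa [Pi.mul_def] using hQ'top.mul hPtop)
    simpa using h
  have hQ''P : ∫ y : ℝ, deriv (deriv Q) y * P y
      = (∫ y : ℝ, P y * Q y) - ∫ y : ℝ, P y * Q y ^ 5 := by
    rw [← MeasureTheory.integral_sub hPQint hPQ5int]
    congr 1
    funext y
    have h := hQeq y
    have : deriv (deriv Q) y = Q y - Q y ^ 5 := by linarith
    rw [this]; ring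
  have step1 : ∫ y : ℝ, g y * Q y = -4 * ∫ y : ℝ, P y * Q y ^ 5 := by
    have hsplit : ∫ y : ℝ, g y * Q y
        = (∫ y : ℝ, P y * Q y) - (∫ y : ℝ, Q y * deriv (deriv P) y)
          - 5 * ∫ y : ℝ, P y * Q y ^ 5 := by
      have e1 : ∫ y : ℝ, g y * Q y
          = ∫ y : ℝ, ((P y * Q y - Q y * deriv (deriv P) y) - 5 * (P y * Q y ^ 5)) := by
        congr 1
        funext y
        simp only [hgdef]
        ring
      have hsubint : Integrable (fun y : ℝ => P y * Q y - Q y * deriv (deriv P) y) :=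
        hPQint.sub hQP''int
      have hmulint : Integrable (fun y : ℝ => 5 * (P y * Q y ^ 5)) := hPQ5int.const_mul 5
      rw [e1, MeasureTheory.integral_sub hsubint hmulint,
        MeasureTheory.integral_sub hPQint hQP''int, MeasureTheory.integral_const_mul]
    rw [hsplit, ibp1, ibp2, hQ''P]
    ring
  -- Step 2 : ∫ R Q = 4 m₀²
  have hodd : ∫ y : ℝ, y * Q y ^ 2 = 0 := by
    have h1 : ∫ y : ℝ, y * Q y ^ 2 = ∫ y : ℝ, (-y) * Q (-y) ^ 2 :=
      (integral_neg_eq_self (fun y : ℝ => y * Q y ^ 2) volume).symm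
    have h2 : ∫ y : ℝ, (-y) * Q (-y) ^ 2 = - ∫ y : ℝ, y * Q y ^ 2 := by
      rw [← MeasureTheory.integral_neg]
      congr 1
      funext y
      rw [hQeven y]
      ring
    linarith [h1.trans h2]
  have hFQ : ∫ y : ℝ, F y * Q y = 8 * m₀ ^ 2 := by
    have h := MeasureTheory.integral_of_hasDerivAt_of_tendsto
      (f := fun y => (1/2) * (F y * F y)) (f' := fun y => F y * Q y)
      (m := 0) (n := (1/2) * ((4*m₀) * (4*m₀)))
      (fun x => by
        have h : HasDerivAt (fun y => (1/2 : ℝ) * (F y * F y)) ((1/2 : ℝ) * (Q x * F x + F x * Q x)) x :=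
          ((hF x).mul (hF x)).const_mul (1/2 : ℝ)
        exact h.congr_deriv (by ring))
      hFQint
      (by simpa using (hFbot.mul hFbot).const_mul (1/2 : ℝ))
      ((hFtop.mul hFtop).const_mul (1/2 : ℝ))
    rw [h]; ring
  have step2 : ∫ y : ℝ, R y * Q y = 4 * m₀ ^ 2 := by
    have hsplit : ∫ y : ℝ, R y * Q y
        = (∫ y : ℝ, y * Q y ^ 2) - (1/2) * (∫ y : ℝ, F y * Q y)
          + 2 * m₀ * ∫ y : ℝ, Q y := by
      have e1 : ∫ y : ℝ, R y * Q y
          = ∫ y : ℝ, ((y * Q y ^ 2 - (1/2) * (F y * Q y)) + (2 * m₀) * Q y) := by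
        congr 1
        funext y
        simp only [hRdef]
        ring
      have h12int : Integrable (fun y : ℝ => (1/2) * (F y * Q y)) := hFQint.const_mul (1/2)
      have hsubint : Integrable (fun y : ℝ => y * Q y ^ 2 - (1/2) * (F y * Q y)) :=
        hyQ2int.sub h12int
      have hmulint : Integrable (fun y : ℝ => (2 * m₀) * Q y) := hQint.const_mul (2*m₀)
      rw [e1, MeasureTheory.integral_add hsubint hmulint,
        MeasureTheory.integral_sub hyQ2int h12int,
        MeasureTheory.integral_const_mul, MeasureTheory.integral_const_mul]
    rw [hsplit, hodd, hFQ, h4m]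
    ring
  -- conclude
  have hgq : ∫ y : ℝ, g y * Q y = ∫ y : ℝ, R y * Q y := by
    congr 1
    funext y
    rw [hgR y]
  have : -4 * ∫ y : ℝ, P y * Q y ^ 5 = 4 * m₀ ^ 2 := by
    rw [← step1, hgq, step2]
  linarith
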